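/- For every r ∈ (0,1), every ρ > 0 and every x ≥ 0, one has H_{r,ρ}(x) ≥ 0, where H_{r,ρ}(x) = (√(2ρ/π) / ∏_{n=0}^∞ (1 − r^{2n+1})) · Σ_{n=0}^∞ (r^{−2n} / ∏_{k=1}^{n} (1 − r^{−2k})) · exp(−ρ r^{−2n} x²/2). (Note that the summands alternate in sign, so nonnegativity of the sum is not termwise.) -/

import Mathlib

open Finset Filter Real Topology

namespace Stmt1Aux

noncomputable def Pq (q : ℝ) (m : ℕ) : ℝ := ∏ k ∈ Finset.Icc 1 m, (1 - q ^ k)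

lemma Pq_zero (q : ℝ) : Pq q 0 = 1 := by simp [Pq]

lemma Pq_succ (q : ℝ) (m : ℕ) : Pq q (m + 1) = Pq q m * (1 - q ^ (m + 1)) := by
  rw [Pq, Pq, Finset.prod_Icc_succ_top (Nat.le_add_left 1 m)]

variable {q : ℝ} (hq0 : 0 < q) (hq1 : q < 1)

include hq0 hq1

lemma Pq_pos (m : ℕ) : 0 < Pq q m := by
  refine Finset.prod_pos fun k hk => ?_
  have hk1 : k ≠ 0 := by have := (Finset.mem_Icc.1 hk).1; omega
  have : q ^ k < 1 := pow_lt_one₀ hq0.le hq1 hk1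
  linarith

lemma Pq_ne (m : ℕ) : Pq q m ≠ 0 := (Pq_pos hq0 hq1 m).ne'

lemma one_sub_pow_ne (m : ℕ) : (1 : ℝ) - q ^ (m + 1) ≠ 0 := by
  have h1 : q ^ (m + 1) < 1 := pow_lt_one₀ hq0.le hq1 (by omega)
  intro h; linarith

lemma Pq_antitone : Antitone (Pq q) := by
  refine antitone_nat_of_succ_le fun m => ?_
  rw [Pq_succ]
  have h1 : 0 < Pq q m := Pq_pos hq0 hq1 m
  have h2 : 0 < q ^ (m + 1) := pow_pos hq0 _
  nlinarith

omit hq0 hq1 in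
lemma one_sub_sum_le_prod (s : Finset ℕ) (f : ℕ → ℝ) (h0 : ∀ i ∈ s, 0 ≤ f i)
    (h1 : ∀ i ∈ s, f i ≤ 1) : 1 - ∑ i ∈ s, f i ≤ ∏ i ∈ s, (1 - f i) := by
  classical
  induction s using Finset.induction with
  | empty => simp
  | @insert a s ha ih =>
    rw [Finset.sum_insert ha, Finset.prod_insert ha]
    have h0a : 0 ≤ f a := h0 a (Finset.mem_insert_self a s)
    have h1a : f a ≤ 1 := h1 a (Finset.mem_insert_self a s)
    have hs0 : 0 ≤ ∑ i ∈ s, f i :=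
      Finset.sum_nonneg fun i hi => h0 i (Finset.mem_insert_of_mem hi)
    have ihs := ih (fun i hi => h0 i (Finset.mem_insert_of_mem hi))
      (fun i hi => h1 i (Finset.mem_insert_of_mem hi))
    nlinarith

omit hq0 hq1 in
lemma Pq_tail_sum (M : ℕ) : ∀ j : ℕ,
    (1 - q) * ∑ k ∈ Finset.Ioc M (M + j), q ^ k = q ^ (M + 1) - q ^ (M + j + 1) := by
  intro j
  induction j with
  | zero => simp
  | succ j ih =>
    rw [show M + (j + 1) = (M + j) + 1 by ring,
      Finset.sum_Ioc_succ_top (Nat.le_add_right M j), mul_add, ih]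
    ring

lemma Pq_lower : ∃ c : ℝ, 0 < c ∧ ∀ m, c ≤ Pq q m := by
  obtain ⟨M, hM⟩ : ∃ M : ℕ, q ^ (M + 1) < (1 - q) / 2 := by
    have h := tendsto_pow_atTop_nhds_zero_of_lt_one hq0.le hq1
    have h2 : (0 : ℝ) < (1 - q) / 2 := by linarith
    obtain ⟨M, hM⟩ := (h.eventually (eventually_lt_nhds h2)).exists
    exact ⟨M, lt_of_le_of_lt (pow_le_pow_of_le_one hq0.le hq1.le (by omega)) hM⟩
  refine ⟨Pq q M / 2, by have := Pq_pos hq0 hq1 M; linarith, fun m => ?_⟩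
  rcases le_or_gt m M with h | h
  · have h1 := Pq_antitone hq0 hq1 h
    have h2 := Pq_pos hq0 hq1 M
    linarith
  · obtain ⟨j, rfl⟩ : ∃ j, m = M + j := ⟨m - M, by omega⟩
    have hsplit : Pq q (M + j) = Pq q M * ∏ k ∈ Finset.Ioc M (M + j), (1 - q ^ k) := by
      rw [Pq, Pq, show Finset.Icc 1 M = Finset.Ioc 0 M by ext k; simp; omega,
        show Finset.Icc 1 (M + j) = Finset.Ioc 0 (M + j) by ext k; simp; omega]
      exact (Finset.prod_Ioc_consecutive _ (Nat.zero_le M) (Nat.le_add_right M j)).symm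
    have hsum : ∑ k ∈ Finset.Ioc M (M + j), q ^ k ≤ 1 / 2 := by
      have h1 := Pq_tail_sum (q := q) M j
      have h2 : 0 < q ^ (M + j + 1) := pow_pos hq0 _
      have h3 : (0 : ℝ) < 1 - q := by linarith
      have h4 : (1 - q) * ∑ k ∈ Finset.Ioc M (M + j), q ^ k ≤ (1 - q) * (1 / 2) := by
        rw [h1]; linarith
      exact le_of_mul_le_mul_left h4 h3
    have hprod : 1 - ∑ k ∈ Finset.Ioc M (M + j), q ^ k
        ≤ ∏ k ∈ Finset.Ioc M (M + j), (1 - q ^ k) := by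
      refine one_sub_sum_le_prod _ _ (fun i _ => (pow_pos hq0 i).le) fun i _ =>
        pow_le_one₀ hq0.le hq1.le
    have hPM := Pq_pos hq0 hq1 M
    calc Pq q M / 2 = Pq q M * (1 / 2) := by ring
      _ ≤ Pq q M * (1 - ∑ k ∈ Finset.Ioc M (M + j), q ^ k) := by nlinarith
      _ ≤ Pq q M * ∏ k ∈ Finset.Ioc M (M + j), (1 - q ^ k) := by nlinarith
      _ = Pq q (M + j) := hsplit.symm

/-- coefficients of the finite approximations -/
noncomputable def cc (q : ℝ) (M n : ℕ) : ℝ :=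
  (-1) ^ n * q ^ (n.choose 2) / (Pq q n * Pq q (M - n))

noncomputable def dd (q : ℝ) (N n : ℕ) : ℝ :=
  (-1) ^ n * q ^ (n.choose 2 + n) / (Pq q n * Pq q (N - n))

omit hq0 hq1 in
lemma choose_two_succ (n : ℕ) : (n + 1).choose 2 = n.choose 2 + n := by
  rw [Nat.choose_succ_succ]
  simp [Nat.choose_one_right, Nat.add_comm]

lemma cc_split (N : ℕ) : ∀ n ∈ Finset.range (N + 2),
    (1 - q ^ (N + 1)) * cc q (N + 1) n =
      (if n < N + 1 then dd q N n else 0) + (if n = 0 then 0 else -(dd q N (n - 1))) := by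
  intro n hn
  rw [Finset.mem_range] at hn
  rcases Nat.eq_zero_or_pos n with rfl | hn0
  · rw [if_pos (by omega), if_pos rfl, add_zero]
    have h1 : Pq q (N + 1) = Pq q N * (1 - q ^ (N + 1)) := Pq_succ q N
    have h2 := Pq_ne hq0 hq1 N
    have h3 := one_sub_pow_ne hq0 hq1 N
    simp only [cc, dd, Nat.sub_zero, pow_zero, one_mul, Pq_zero]
    norm_num
    rw [h1]
    field_simp
  · obtain ⟨m, rfl⟩ : ∃ m, n = m + 1 := ⟨n - 1, by omega⟩
    rcases eq_or_lt_of_le (Nat.lt_succ_iff.mp hn) with heq | hlt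
    · -- n = N + 1
      rw [if_neg (by omega), if_neg (by omega), zero_add]
      obtain rfl : m = N := by omega
      simp only [cc, dd, Nat.sub_self, Nat.add_sub_cancel, Pq_zero, mul_one]
      rw [choose_two_succ, Pq_succ]
      have h2 := Pq_ne hq0 hq1 m
      have h3 := one_sub_pow_ne hq0 hq1 m
      field_simp
      ring
    · -- middle case : m + 1 ≤ N
      have hmN : m + 1 ≤ N := by omega
      obtain ⟨j, rfl⟩ : ∃ j, N = m + 1 + j := ⟨N - (m + 1), by omega⟩
      rw [if_pos (by omega), if_neg (by omega)]
      have e1 : m + 1 + j + 1 - (m + 1) = j + 1 := by omega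
      have e2 : m + 1 + j - (m + 1) = j := by omega
      have e4 : m + 1 - 1 = m := by omega
      rw [cc, dd, dd, e1, e2, e4, show m + 1 + j - m = j + 1 by omega]
      rw [choose_two_succ, Pq_succ q m, Pq_succ q j]
      have h2 := Pq_ne hq0 hq1 m
      have h3 := one_sub_pow_ne hq0 hq1 m
      have h4 := Pq_ne hq0 hq1 j
      have h5 := one_sub_pow_ne hq0 hq1 j
      field_simp
      ring

lemma Isum (N : ℕ) : ∑ n ∈ Finset.range (N + 2), cc q (N + 1) n = 0 := by
  have h3 := one_sub_pow_ne hq0 hq1 N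
  have key : (1 - q ^ (N + 1)) * ∑ n ∈ Finset.range (N + 2), cc q (N + 1) n = 0 := by
    rw [Finset.mul_sum, Finset.sum_congr rfl (cc_split hq0 hq1 N), Finset.sum_add_distrib]
    have hA : ∑ n ∈ Finset.range (N + 2), (if n < N + 1 then dd q N n else 0)
        = ∑ n ∈ Finset.range (N + 1), dd q N n := by
      rw [Finset.sum_range_succ, if_neg (lt_irrefl _), add_zero]
      exact Finset.sum_congr rfl fun n hn => if_pos (Finset.mem_range.1 hn)
    have hB : ∑ n ∈ Finset.range (N + 2), (if n = 0 then 0 else -(dd q N (n - 1)))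
        = -∑ n ∈ Finset.range (N + 1), dd q N n := by
      rw [Finset.sum_range_succ']
      simp [Finset.sum_neg_distrib]
    rw [hA, hB]
    ring
  rcases mul_eq_zero.1 key with h | h
  · exact absurd h h3
  · exact h

noncomputable def Ff (q : ℝ) (M : ℕ) (y : ℝ) : ℝ :=
  ∑ n ∈ Finset.range (M + 1), cc q M n * Real.exp (-((q ^ n)⁻¹ * y))

lemma Ff_zero (N : ℕ) : Ff q (N + 1) 0 = 0 := by
  have h := Isum hq0 hq1 N
  simp only [Ff, mul_zero, neg_zero, Real.exp_zero, mul_one]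
  exact h

lemma cc_ratio (N n : ℕ) (hn : n ≤ N) :
    ((q ^ (N + 1))⁻¹ - (q ^ n)⁻¹) * cc q (N + 1) n = (q ^ (N + 1))⁻¹ * cc q N n := by
  obtain ⟨j, rfl⟩ : ∃ j, N = n + j := ⟨N - n, by omega⟩
  have e1 : n + j + 1 - n = j + 1 := by omega
  have e2 : n + j - n = j := by omega
  rw [cc, cc, e1, e2, Pq_succ]
  have hqn : q ^ n ≠ 0 := (pow_pos hq0 n).ne'
  have hqN : q ^ (n + j + 1) ≠ 0 := (pow_pos hq0 _).ne'
  have h1 := Pq_ne hq0 hq1 n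
  have h2 := Pq_ne hq0 hq1 j
  have h3 := one_sub_pow_ne hq0 hq1 j
  field_simp
  ring

lemma Ff_hasDeriv (N : ℕ) (y : ℝ) :
    HasDerivAt (Ff q (N + 1)) ((q ^ (N + 1))⁻¹ * (Ff q N y - Ff q (N + 1) y)) y := by
  have h : ∀ n ∈ Finset.range (N + 2),
      HasDerivAt (fun z => cc q (N + 1) n * Real.exp (-((q ^ n)⁻¹ * z)))
        (cc q (N + 1) n * (Real.exp (-((q ^ n)⁻¹ * y)) * -(q ^ n)⁻¹)) y := by
    intro n _
    have h1 : HasDerivAt (fun z : ℝ => -((q ^ n)⁻¹ * z)) (-(q ^ n)⁻¹) y := by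
      simpa using ((hasDerivAt_id y).const_mul ((q ^ n)⁻¹)).fun_neg
    exact h1.exp.const_mul _
  have hsum := HasDerivAt.fun_sum h
  have hval : ∑ n ∈ Finset.range (N + 2),
      cc q (N + 1) n * (Real.exp (-((q ^ n)⁻¹ * y)) * -(q ^ n)⁻¹)
      = (q ^ (N + 1))⁻¹ * (Ff q N y - Ff q (N + 1) y) := by
    have key : ∑ n ∈ Finset.range (N + 2),
        cc q (N + 1) n * (Real.exp (-((q ^ n)⁻¹ * y)) * -(q ^ n)⁻¹)
        + ∑ n ∈ Finset.range (N + 2),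
            (q ^ (N + 1))⁻¹ * (cc q (N + 1) n * Real.exp (-((q ^ n)⁻¹ * y)))
        = (q ^ (N + 1))⁻¹ * Ff q N y := by
      rw [← Finset.sum_add_distrib]
      have step1 : ∀ n ∈ Finset.range (N + 2),
          cc q (N + 1) n * (Real.exp (-((q ^ n)⁻¹ * y)) * -(q ^ n)⁻¹)
            + (q ^ (N + 1))⁻¹ * (cc q (N + 1) n * Real.exp (-((q ^ n)⁻¹ * y)))
          = ((q ^ (N + 1))⁻¹ - (q ^ n)⁻¹) * cc q (N + 1) n
              * Real.exp (-((q ^ n)⁻¹ * y)) := by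
        intro n _; ring
      rw [Finset.sum_congr rfl step1, Finset.sum_range_succ, sub_self, zero_mul, zero_mul,
        add_zero, Ff, Finset.mul_sum]
      refine Finset.sum_congr rfl fun n hn => ?_
      rw [cc_ratio hq0 hq1 N n (Nat.lt_succ_iff.mp (Finset.mem_range.1 hn)), mul_assoc]
    have hFf : Ff q (N + 1) y
        = ∑ n ∈ Finset.range (N + 2), cc q (N + 1) n * Real.exp (-((q ^ n)⁻¹ * y)) := rfl
    rw [mul_sub, hFf, Finset.mul_sum]
    linarith [key]
  rw [← hval]
  exact hsum

lemma Ff_nonneg : ∀ N : ℕ, ∀ y : ℝ, 0 ≤ y → 0 ≤ Ff q N y := by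
  intro N
  induction N with
  | zero =>
    intro y hy
    have h : Ff q 0 y = Real.exp (-((q ^ 0)⁻¹ * y)) := by
      simp [Ff, cc, Pq_zero]
    rw [h]
    positivity
  | succ N ih =>
    intro y hy
    set a := (q ^ (N + 1))⁻¹ with ha
    have ha0 : 0 < a := by rw [ha]; positivity
    have hg : ∀ z : ℝ, HasDerivAt (fun w => Real.exp (a * w) * Ff q (N + 1) w)
        (a * Real.exp (a * z) * Ff q N z) z := by
      intro z
      have h1 : HasDerivAt (fun w : ℝ => Real.exp (a * w)) (Real.exp (a * z) * a) z := by
        simpa using ((hasDerivAt_id z).const_mul a).exp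
      have h2 := Ff_hasDeriv hq0 hq1 N z
      have h3 := h1.mul h2
      refine h3.congr_deriv ?_
      rw [ha]
      ring
    have hcont : ContinuousOn (fun w => Real.exp (a * w) * Ff q (N + 1) w) (Set.Ici 0) :=
      fun z _ => (hg z).differentiableAt.continuousAt.continuousWithinAt
    have hmono : MonotoneOn (fun w => Real.exp (a * w) * Ff q (N + 1) w) (Set.Ici 0) := by
      refine monotoneOn_of_deriv_nonneg (convex_Ici 0) hcont
        (fun z _ => (hg z).differentiableAt.differentiableWithinAt) ?_
      intro z hz
      rw [(hg z).deriv]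
      rw [interior_Ici] at hz
      have hz0 : (0 : ℝ) ≤ z := (Set.mem_Ioi.1 hz).le
      have hFN := ih z hz0
      have he := Real.exp_pos (a * z)
      positivity
    have hle := hmono Set.self_mem_Ici (Set.mem_Ici.2 hy) hy
    have h0 : Real.exp (a * 0) * Ff q (N + 1) 0 = 0 := by
      rw [Ff_zero hq0 hq1 N, mul_zero]
    simp only [] at hle
    rw [h0] at hle
    have hexp := Real.exp_pos (a * y)
    nlinarith [hle]

omit hq1 in
lemma Bq_eq (n : ℕ) :
    Pq q n = (-1) ^ n * q ^ (n.choose 2 + n) * ∏ k ∈ Finset.Icc 1 n, (1 - (q ^ k)⁻¹) := by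
  induction n with
  | zero => simp [Pq_zero]
  | succ n ih =>
    rw [Pq_succ, ih, Finset.prod_Icc_succ_top (Nat.le_add_left 1 n), choose_two_succ]
    have hqn : q ^ (n + 1) ≠ 0 := (pow_pos hq0 _).ne'
    field_simp
    ring

omit hq0 hq1 in
lemma r_zpow (r : ℝ) (k : ℕ) : r ^ (-(2 * (k : ℤ))) = ((r ^ 2) ^ k)⁻¹ := by
  rw [zpow_neg]
  congr 1
  rw [show (2 * (k : ℤ)) = ((2 * k : ℕ) : ℤ) by push_cast; ring, zpow_natCast, pow_mul]

lemma Ac_closed (r : ℝ) (hq : q = r ^ 2) (n : ℕ) :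
    r ^ (-(2 * (n : ℤ))) / ∏ k ∈ Finset.Icc 1 n, (1 - r ^ (-(2 * (k : ℤ))))
      = (-1) ^ n * q ^ (n.choose 2) / Pq q n := by
  have hprod : ∏ k ∈ Finset.Icc 1 n, (1 - r ^ (-(2 * (k : ℤ))))
      = ∏ k ∈ Finset.Icc 1 n, (1 - (q ^ k)⁻¹) :=
    Finset.prod_congr rfl fun k _ => by rw [r_zpow r k, hq]
  rw [r_zpow r n, hprod, ← hq]
  have hB := Bq_eq hq0 n
  have hBne : ∏ k ∈ Finset.Icc 1 n, (1 - (q ^ k)⁻¹) ≠ 0 := by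
    intro h
    rw [h, mul_zero] at hB
    exact Pq_ne hq0 hq1 n hB
  have h1 := Pq_ne hq0 hq1 n
  have hqn : q ^ n ≠ 0 := (pow_pos hq0 n).ne'
  rw [div_eq_div_iff hBne h1, hB]
  field_simp
  ring

end Stmt1Aux

noncomputable def psi (r : ℝ) : ℝ :=
  Real.sqrt (2 / Real.pi) * ∏' n : ℕ, (1 - r ^ (2 * n + 2)) / (1 - r ^ (2 * n + 1))

noncomputable def H (r ρ x : ℝ) : ℝ :=
  (Real.sqrt (2 * ρ / Real.pi) / ∏' n : ℕ, (1 - r ^ (2 * n + 1))) *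
    ∑' n : ℕ,
      (r ^ (-(2 * (n : ℤ))) / ∏ k ∈ Finset.Icc 1 n, (1 - r ^ (-(2 * (k : ℤ))))) *
        Real.exp (-ρ * r ^ (-(2 * (n : ℤ))) * x ^ 2 / 2)

open Stmt1Aux in
theorem stmt1 (r ρ : ℝ) (hr0 : 0 < r) (hr1 : r < 1) (hρ : 0 < ρ) :
    ∀ x : ℝ, 0 ≤ x → 0 ≤ H r ρ x := by
  intro x hx
  unfold H
  have hq0 : 0 < r ^ 2 := by positivity
  have hq1 : r ^ 2 < 1 := by nlinarith
  set q : ℝ := r ^ 2 with hqdef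
  -- prefactor is nonnegative
  have hpre : 0 ≤ Real.sqrt (2 * ρ / Real.pi) / ∏' n : ℕ, (1 - r ^ (2 * n + 1)) := by
    apply div_nonneg (Real.sqrt_nonneg _)
    by_cases h : Multipliable (fun n : ℕ => 1 - r ^ (2 * n + 1))
    · refine ge_of_tendsto' h.hasProd fun s => Finset.prod_nonneg fun i _ => ?_
      have : r ^ (2 * i + 1) < 1 := pow_lt_one₀ hr0.le hr1 (by omega)
      linarith
    · rw [tprod_eq_one_of_not_multipliable h]
      norm_num
  refine mul_nonneg hpre ?_
  set y : ℝ := ρ * x ^ 2 / 2 with hydef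
  have hy0 : 0 ≤ y := by positivity
  have hterm : ∀ n : ℕ,
      (r ^ (-(2 * (n : ℤ))) / ∏ k ∈ Finset.Icc 1 n, (1 - r ^ (-(2 * (k : ℤ))))) *
        Real.exp (-ρ * r ^ (-(2 * (n : ℤ))) * x ^ 2 / 2)
      = (-1) ^ n * q ^ (n.choose 2) / Pq q n * Real.exp (-((q ^ n)⁻¹ * y)) := by
    intro n
    rw [Ac_closed hq0 hq1 r hqdef n, r_zpow r n, ← hqdef]
    congr 2
    rw [hydef]
    ring
  rw [tsum_congr hterm]
  obtain ⟨c, hc0, hc⟩ := Pq_lower hq0 hq1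
  have hbdd : BddBelow (Set.range (Pq q)) := ⟨c, by rintro _ ⟨m, rfl⟩; exact hc m⟩
  set Pinf : ℝ := ⨅ m, Pq q m with hPdef
  have hPinf_ge : c ≤ Pinf := le_ciInf hc
  have hPinf0 : 0 < Pinf := lt_of_lt_of_le hc0 hPinf_ge
  have htendP : Tendsto (Pq q) atTop (𝓝 Pinf) := tendsto_atTop_ciInf (Pq_antitone hq0 hq1) hbdd
  set g : ℕ → ℝ := fun n => (-1) ^ n * q ^ (n.choose 2) / Pq q n * Real.exp (-((q ^ n)⁻¹ * y))
    with hgdef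
  set f : ℕ → ℕ → ℝ := fun N n =>
    if n ≤ N then cc q N n * Real.exp (-((q ^ n)⁻¹ * y)) else 0 with hfdef
  have hexple : ∀ n : ℕ, Real.exp (-((q ^ n)⁻¹ * y)) ≤ 1 := by
    intro n
    rw [Real.exp_le_one_iff]
    have h : 0 ≤ (q ^ n)⁻¹ * y := by positivity
    linarith
  have hchoose : ∀ n : ℕ, n ≤ n.choose 2 + 1 := by
    intro n
    cases n with
    | zero => simp
    | succ m => rw [choose_two_succ]; omega
  have hpowle : ∀ n : ℕ, q ^ n.choose 2 ≤ q ^ n / q := by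
    intro n
    rw [le_div_iff₀ hq0, ← pow_succ]
    exact pow_le_pow_of_le_one hq0.le hq1.le (hchoose n)
  have hboundf : ∀ N n : ℕ, ‖f N n‖ ≤ q ^ n / (q * (c * c)) := by
    intro N n
    rw [Real.norm_eq_abs, hfdef]
    by_cases hn : n ≤ N
    · simp only [if_pos hn]
      rw [abs_mul, abs_of_pos (Real.exp_pos _)]
      have hcc : |cc q N n| = q ^ n.choose 2 / (Pq q n * Pq q (N - n)) := by
        rw [cc, abs_div, abs_mul, abs_pow, abs_neg, abs_one, one_pow, one_mul,
          abs_of_nonneg (pow_nonneg hq0.le _),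
          abs_of_pos (mul_pos (Pq_pos hq0 hq1 n) (Pq_pos hq0 hq1 (N - n)))]
      have h1 : |cc q N n| ≤ q ^ n.choose 2 / (c * c) := by
        rw [hcc]
        apply div_le_div_of_nonneg_left (pow_nonneg hq0.le _) (by positivity)
        exact mul_le_mul (hc n) (hc (N - n)) hc0.le (Pq_pos hq0 hq1 n).le
      calc |cc q N n| * Real.exp (-((q ^ n)⁻¹ * y))
          ≤ q ^ n.choose 2 / (c * c) * 1 := by
            apply mul_le_mul h1 (hexple n) (Real.exp_pos _).le (by positivity)
        _ = q ^ n.choose 2 / (c * c) := mul_one _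
        _ ≤ (q ^ n / q) / (c * c) := by
            exact (div_le_div_iff_of_pos_right (by positivity : (0:ℝ) < c * c)).mpr (hpowle n)
        _ = q ^ n / (q * (c * c)) := by rw [div_div]
    · simp only [if_neg hn, abs_zero]
      positivity
  have hsumbound : Summable (fun n : ℕ => q ^ n / (q * (c * c))) :=
    (summable_geometric_of_lt_one hq0.le hq1).div_const _
  have hab : ∀ n : ℕ, Tendsto (fun N => f N n) atTop (𝓝 (g n / Pinf)) := by
    intro n
    have h1 : Tendsto (fun N : ℕ => Pq q (N - n)) atTop (𝓝 Pinf) :=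
      htendP.comp (tendsto_sub_atTop_nat n)
    have h2 : Tendsto (fun N : ℕ =>
        (-1) ^ n * q ^ n.choose 2 / (Pq q n * Pq q (N - n)) * Real.exp (-((q ^ n)⁻¹ * y)))
        atTop (𝓝 ((-1) ^ n * q ^ n.choose 2 / (Pq q n * Pinf) * Real.exp (-((q ^ n)⁻¹ * y)))) := by
      apply Tendsto.mul_const
      exact Tendsto.div tendsto_const_nhds (tendsto_const_nhds.mul h1)
        (mul_pos (Pq_pos hq0 hq1 n) hPinf0).ne'
    have heq : (fun N => f N n) =ᶠ[atTop] fun N =>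
        (-1) ^ n * q ^ n.choose 2 / (Pq q n * Pq q (N - n)) * Real.exp (-((q ^ n)⁻¹ * y)) := by
      filter_upwards [eventually_ge_atTop n] with N hN
      rw [hfdef]
      simp only [if_pos hN]
      rw [cc]
    have h3 := h2.congr' heq.symm
    have hval : g n / Pinf
        = (-1) ^ n * q ^ n.choose 2 / (Pq q n * Pinf) * Real.exp (-((q ^ n)⁻¹ * y)) := by
      rw [hgdef]
      have := Pq_ne hq0 hq1 n
      field_simp
    rw [hval]
    exact h3
  have hbd : ∀ᶠ N in (atTop : Filter ℕ), ∀ n : ℕ, ‖f N n‖ ≤ q ^ n / (q * (c * c)) :=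
    Eventually.of_forall fun N => hboundf N
  have htann := tendsto_tsum_of_dominated_convergence hsumbound hab hbd
  have hFf_eq : ∀ N : ℕ, ∑' n, f N n = Ff q N y := by
    intro N
    rw [tsum_eq_sum (s := Finset.range (N + 1))
      (fun n hn => by
        rw [hfdef]
        exact if_neg fun h : n ≤ N => hn (Finset.mem_range.2 (Nat.lt_succ_of_le h)))]
    refine Finset.sum_congr rfl fun n hn => ?_
    rw [hfdef]
    exact if_pos (Nat.lt_succ_iff.mp (Finset.mem_range.1 hn))
  have htann' : Tendsto (fun N => Ff q N y) atTop (𝓝 ((∑' n, g n) / Pinf)) := by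
    rw [← tsum_div_const]
    exact htann.congr hFf_eq
  have hfin : 0 ≤ (∑' n, g n) / Pinf :=
    ge_of_tendsto' htann' fun N => Ff_nonneg hq0 hq1 N y hy0
  have hrw : (∑' n, g n) = (∑' n, g n) / Pinf * Pinf := (div_mul_cancel₀ _ hPinf0.ne').symm
  rw [hgdef] at hrw
  rw [hrw]
  exact mul_nonneg hfin hPinf0.le
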